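/- If G is a group of cardinality less than 2^ℵ₀, then G is noncommutatively slender if and only if G is residually noncommutatively slender (i.e., for every nontrivial g ∈ G there is a homomorphism ψ from G to some noncommutatively slender group H with ψ(g) ≠ 1). -/

import Mathlib

open CategoryTheory
open scoped FundamentalGroupoid

noncomputable section

/-- The homomorphism of fundamental groups induced by a continuous map. -/
def FundamentalGroup.inducedHom {X Y : Type} [TopologicalSpace X] [TopologicalSpace Y]
    (f : C(X, Y)) (x : X) :
    FundamentalGroup X x →* FundamentalGroup Y (f x) :=
  CategoryTheory.Functor.mapEnd (⟨x⟩ : FundamentalGroupoid X)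
    ((πₘ (show TopCat.of X ⟶ TopCat.of Y from TopCat.ofHom f)) :
      FundamentalGroupoid X ⥤ FundamentalGroupoid Y)

/-- The `n`-th circle of the Hawaiian earring: the circle in the plane of radius
`1/(n+1)` centered at `(1/(n+1), 0)`. -/
def heCircle (n : ℕ) : Set (ℝ × ℝ) :=
  {p | (p.1 - 1 / (n + 1)) ^ 2 + p.2 ^ 2 = (1 / (n + 1)) ^ 2}

/-- The Hawaiian earring: the union of the circles of radius `1/(n+1)` centered at
`(1/(n+1), 0)` for `n ∈ ℕ`. -/
def heSpace : Set (ℝ × ℝ) := ⋃ n : ℕ, heCircle n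

theorem origin_mem_heCircle (n : ℕ) : ((0, 0) : ℝ × ℝ) ∈ heCircle n := by
  simp [heCircle]

theorem origin_mem_heSpace : ((0, 0) : ℝ × ℝ) ∈ heSpace :=
  Set.mem_iUnion.mpr ⟨0, origin_mem_heCircle 0⟩

/-- The basepoint of the Hawaiian earring. -/
def heBase : heSpace := ⟨(0, 0), origin_mem_heSpace⟩

/-- The Hawaiian earring group: the fundamental group of the Hawaiian earring at the
wedge point. -/
def HEG : Type := FundamentalGroup heSpace heBase

noncomputable instance : Group HEG :=
  inferInstanceAs (Group (FundamentalGroup heSpace heBase))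

/-- The union of the circles of index `≥ n`. -/
def heTailSet (n : ℕ) : Set (ℝ × ℝ) := ⋃ k : ℕ, heCircle (n + k)

theorem heTailSet_subset (n : ℕ) : heTailSet n ⊆ heSpace := by
  intro p hp
  rcases Set.mem_iUnion.mp hp with ⟨k, hk⟩
  exact Set.mem_iUnion.mpr ⟨n + k, hk⟩

theorem origin_mem_heTailSet (n : ℕ) : ((0, 0) : ℝ × ℝ) ∈ heTailSet n :=
  Set.mem_iUnion.mpr ⟨0, origin_mem_heCircle (n + 0)⟩

/-- The tail subgroup `𝕳^n` of the Hawaiian earring group: the image of the fundamental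
group of the union of the circles of index `≥ n` under the inclusion. -/
def heTailSubgroup (n : ℕ) : Subgroup HEG :=
  MonoidHom.range
    (FundamentalGroup.inducedHom
      (⟨Set.inclusion (heTailSet_subset n), continuous_inclusion (heTailSet_subset n)⟩ :
        C(heTailSet n, heSpace))
      ⟨(0, 0), origin_mem_heTailSet n⟩)

/-- A group `G` is noncommutatively slender if every homomorphism from the Hawaiian
earring group to `G` kills some tail subgroup `𝕳^n`. -/
def NSlender (G : Type) [Group G] : Prop :=
  ∀ φ : HEG →* G, ∃ n : ℕ, ∀ g ∈ heTailSubgroup n, φ g = 1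



-- ===================== Auxiliary machinery =====================
attribute [local instance] Path.Homotopic.setoid
attribute [local instance] Classical.propDecidable

theorem heTailSet_antitone {m n : ℕ} (h : m ≤ n) : heTailSet n ⊆ heTailSet m := by
  intro p hp
  rcases Set.mem_iUnion.mp hp with ⟨k, hk⟩
  refine Set.mem_iUnion.mpr ⟨n - m + k, ?_⟩
  have he : m + (n - m + k) = n + k := by omega
  rwa [he]

theorem circ_bound {r x y : ℝ} (hr : 0 < r) (h : (x - r) ^ 2 + y ^ 2 = r ^ 2) :
    |x| ≤ 2 * r ∧ |y| ≤ 2 * r := by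
  constructor <;> rw [abs_le] <;> constructor <;>
    nlinarith [sq_nonneg y, sq_nonneg (x - r), sq_nonneg x]

theorem heTailSet_bound {n : ℕ} {p : ℝ × ℝ} (hp : p ∈ heTailSet n) :
    |p.1| ≤ 2 / (n + 1) ∧ |p.2| ≤ 2 / (n + 1) := by
  rcases Set.mem_iUnion.mp hp with ⟨k, hk⟩
  have hr : (0:ℝ) < 1 / ((n:ℝ) + k + 1) := by positivity
  have h : (p.1 - 1 / ((n:ℝ) + k + 1)) ^ 2 + p.2 ^ 2 = (1 / ((n:ℝ) + k + 1)) ^ 2 := by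
    have h0 := hk
    simp only [heCircle, Set.mem_setOf_eq] at h0
    convert h0 using 3 <;> push_cast <;> ring
  have hb := circ_bound hr h
  have h2 : 2 * (1 / ((n:ℝ) + k + 1)) ≤ 2 / ((n:ℝ) + 1) := by
    rw [mul_one_div]
    apply div_le_div_of_nonneg_left (by norm_num) (by positivity)
    linarith [Nat.cast_nonneg (α := ℝ) k]
  exact ⟨hb.1.trans h2, hb.2.trans h2⟩

theorem heTailSet_dist {n : ℕ} {p q : ℝ × ℝ} (hp : p ∈ heTailSet n) (hq : q ∈ heTailSet n) :
    dist p q ≤ 4 / (n + 1) := by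
  have h1 := heTailSet_bound hp
  have h2 := heTailSet_bound hq
  have key : ∀ a b : ℝ, |a| ≤ 2 / ((n:ℝ)+1) → |b| ≤ 2 / ((n:ℝ)+1) → dist a b ≤ 4 / ((n:ℝ)+1) := by
    intro a b ha hb
    rw [Real.dist_eq]
    have h3 : |a - b| ≤ |a| + |b| := abs_sub _ _
    have h4 : (2:ℝ) / ((n:ℝ)+1) + 2 / ((n:ℝ)+1) = 4 / ((n:ℝ)+1) := by ring
    linarith
  rw [Prod.dist_eq]
  exact max_le (key _ _ h1.1 h2.1) (key _ _ h1.2 h2.2)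

/-- The class in the fundamental group of a loop. -/
def pcls {X : Type} [TopologicalSpace X] {x : X} (p : Path x x) : FundamentalGroup X x :=
  FundamentalGroup.fromPath (X := X) (x := x) (Path.Homotopic.Quotient.mk p)

theorem pcls_trans {X : Type} [TopologicalSpace X] {x : X} (p q : Path x x) :
    pcls (p.trans q) = pcls q * pcls p := by
  rfl

theorem inducedHom_pcls {X Y : Type} [TopologicalSpace X] [TopologicalSpace Y]
    (f : C(X, Y)) (x : X) (p : Path x x) :
    FundamentalGroup.inducedHom f x (pcls p) = pcls (p.map f.continuous) := by
  rfl

theorem pcls_surj {X : Type} [TopologicalSpace X] {x : X} (g : FundamentalGroup X x) :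
    ∃ p : Path x x, pcls p = g := by
  refine ⟨(Quotient.out (g : Path.Homotopic.Quotient x x) : Path x x), ?_⟩
  exact Quotient.out_eq _

def heIncl (n : ℕ) : C(heTailSet n, heSpace) :=
  ⟨Set.inclusion (heTailSet_subset n), continuous_inclusion (heTailSet_subset n)⟩

theorem mem_heTailSubgroup_iff {n : ℕ} (x : HEG) :
    x ∈ heTailSubgroup n ↔
      ∃ p : Path heBase heBase, (∀ t, (p t : ℝ × ℝ) ∈ heTailSet n) ∧ pcls p = x := by
  constructor
  · rintro ⟨c, rfl⟩
    obtain ⟨q, rfl⟩ := pcls_surj c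
    refine ⟨(q.map (heIncl n).continuous : Path heBase heBase),
      fun t => (q t).2, ?_⟩
    exact (inducedHom_pcls (heIncl n) _ q).symm
  · rintro ⟨p, hp, rfl⟩
    set q : Path (⟨(0,0), origin_mem_heTailSet n⟩ : heTailSet n)
        ⟨(0,0), origin_mem_heTailSet n⟩ :=
      { toFun := fun t => ⟨(p t : ℝ × ℝ), hp t⟩
        continuous_toFun := by
          apply Continuous.subtype_mk
          exact continuous_subtype_val.comp p.continuous
        source' := Subtype.ext (by show ((p 0 : heSpace) : ℝ × ℝ) = _; rw [p.source]; rfl)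
        target' := Subtype.ext (by show ((p 1 : heSpace) : ℝ × ℝ) = _; rw [p.target]; rfl) } with hq
    refine ⟨pcls q, ?_⟩
    have h2 : (q.map (heIncl n).continuous : Path heBase heBase) = p := by
      apply Path.ext
      funext t
      rfl
    exact (inducedHom_pcls (heIncl n) _ q).trans (congrArg pcls h2)

theorem heTailSubgroup_antitone {m n : ℕ} (h : m ≤ n) :
    heTailSubgroup n ≤ heTailSubgroup m := by
  intro x hx
  obtain ⟨p, hp, rfl⟩ := (mem_heTailSubgroup_iff x).mp hx
  exact (mem_heTailSubgroup_iff _).mpr ⟨p, fun t => heTailSet_antitone h (hp t), rfl⟩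

def FF : ℕ → (ℕ → Path heBase heBase) → Path heBase heBase
  | 0, _ => Path.refl heBase
  | n+1, δ => (δ 0).trans (FF n (fun k => δ (k+1)))

theorem FF_stab : ∀ (n : ℕ) (δ : ℕ → Path heBase heBase) (t : unitInterval),
    (t:ℝ) ≤ 1 - (1/2)^n → FF (n+1) δ t = FF n δ t := by
  intro n
  induction n with
  | zero =>
    intro δ t ht
    have h0 : t = 0 := Subtype.ext (le_antisymm (by simpa using ht) t.2.1)
    rw [h0]
    show (FF 1 δ) 0 = (FF 0 δ) 0
    rw [Path.source, Path.source]
  | succ n ih =>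
    intro δ t ht
    show ((δ 0).trans (FF (n+1) fun k => δ (k+1))) t = ((δ 0).trans (FF n fun k => δ (k+1))) t
    rw [Path.trans_apply, Path.trans_apply]
    split_ifs with h
    · rfl
    · apply ih
      show 2 * (t:ℝ) - 1 ≤ 1 - (1/2)^n
      have he : ((1:ℝ)/2)^(n+1) = (1/2) * (1/2)^n := by ring
      rw [he] at ht
      linarith

theorem FF_ge {n m : ℕ} (hnm : n ≤ m) (δ : ℕ → Path heBase heBase) (t : unitInterval)
    (ht : (t:ℝ) ≤ 1 - (1/2)^n) : FF m δ t = FF n δ t := by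
  induction m with
  | zero =>
    have h0 : n = 0 := by omega
    subst h0
    rfl
  | succ m ih =>
    rcases Nat.lt_or_ge n (m+1) with h | h
    · have hnm' : n ≤ m := by omega
      have hb : (t:ℝ) ≤ 1 - (1/2)^m := by
        have hple : ((1:ℝ)/2)^m ≤ (1/2)^n := pow_le_pow_of_le_one (by norm_num) (by norm_num) hnm'
        linarith
      rw [FF_stab m δ t hb]
      exact ih hnm'
    · have he : n = m + 1 := by omega
      subst he
      rfl

theorem FF_mem (S : Set (ℝ × ℝ)) : ∀ (n : ℕ) (δ : ℕ → Path heBase heBase),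
    (∀ k t, ((δ k t : heSpace) : ℝ × ℝ) ∈ S) → ∀ t, ((FF n δ t : heSpace) : ℝ × ℝ) ∈ S := by
  intro n
  induction n with
  | zero =>
    intro δ h t
    have h0 := h 0 0
    rw [(δ 0).source] at h0
    exact h0
  | succ n ih =>
    intro δ h t
    show ((((δ 0).trans (FF n fun k => δ (k+1))) t : heSpace) : ℝ × ℝ) ∈ S
    rw [Path.trans_apply]
    split_ifs with hc
    · exact h 0 _
    · exact ih (fun k => δ (k+1)) (fun k t => h (k+1) t) _

theorem FF_tail : ∀ (n c m : ℕ) (δ : ℕ → Path heBase heBase),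
    (∀ k t, ((δ k t : heSpace) : ℝ × ℝ) ∈ heTailSet (c + k)) →
    ∀ t : unitInterval, 1 - (1/2)^n ≤ (t:ℝ) →
    ((FF m δ t : heSpace) : ℝ × ℝ) ∈ heTailSet (c + n) := by
  intro n
  induction n with
  | zero =>
    intro c m δ hδ t _
    have h0 := FF_mem (heTailSet c) m δ
      (fun k t => heTailSet_antitone (Nat.le_add_right c k) (hδ k t)) t
    simpa using h0
  | succ n ih =>
    intro c m δ hδ t ht
    cases m with
    | zero => exact origin_mem_heTailSet _
    | succ m =>
      show ((((δ 0).trans (FF m fun k => δ (k+1))) t : heSpace) : ℝ × ℝ) ∈ _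
      rw [Path.trans_apply]
      split_ifs with hc
      · have hp : ((1:ℝ)/2)^(n+1) ≤ 1/2 := by
          calc ((1:ℝ)/2)^(n+1) ≤ (1/2)^1 :=
            pow_le_pow_of_le_one (by norm_num) (by norm_num) (by omega)
          _ = 1/2 := by norm_num
        have ht2 : (t:ℝ) = 1/2 := by linarith
        have harg : (⟨2 * (t:ℝ), by rw [ht2]; norm_num⟩ : unitInterval) = 1 := by
          apply Subtype.ext
          show 2 * (t:ℝ) = 1
          rw [ht2]; norm_num
        rw [harg, (δ 0).target]
        exact origin_mem_heTailSet _
      · have hδ' : ∀ k t, (((fun k => δ (k+1)) k t : heSpace) : ℝ × ℝ) ∈ heTailSet ((c+1) + k) := by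
          intro k t
          have h1 := hδ (k+1) t
          have he : c + (k+1) = (c+1) + k := by omega
          rwa [he] at h1
        have hb : 1 - (1/2)^n ≤ 2 * (t:ℝ) - 1 := by
          have he : ((1:ℝ)/2)^(n+1) = (1/2) * (1/2)^n := by ring
          rw [he] at ht
          linarith
        have h2 := ih (c+1) m (fun k => δ (k+1)) hδ'
          ⟨2 * (t:ℝ) - 1, by
            constructor
            · have hpn : (0:ℝ) ≤ (1/2)^n := pow_nonneg (by norm_num) n
              linarith
            · linarith [t.2.2]⟩ hb
        have he : (c+1) + n = c + (n+1) := by omega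
        rwa [he] at h2

def om (δ : ℕ → Path heBase heBase) (t : unitInterval) : heSpace :=
  if h : ∃ n : ℕ, (t:ℝ) ≤ 1 - (1/2)^n then FF (Nat.find h) δ t else heBase

theorem om_eq (δ : ℕ → Path heBase heBase) (n : ℕ) {t : unitInterval}
    (ht : (t:ℝ) ≤ 1 - (1/2)^n) : om δ t = FF n δ t := by
  have hex : ∃ m : ℕ, (t:ℝ) ≤ 1 - (1/2)^m := ⟨n, ht⟩
  rw [om, dif_pos hex]
  have h1 : FF (max n (Nat.find hex)) δ t = FF (Nat.find hex) δ t :=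
    FF_ge (le_max_right _ _) δ t (Nat.find_spec hex)
  have h2 : FF (max n (Nat.find hex)) δ t = FF n δ t :=
    FF_ge (le_max_left _ _) δ t ht
  rw [← h1, h2]

theorem om_one (δ : ℕ → Path heBase heBase) : om δ 1 = heBase := by
  rw [om, dif_neg]
  rintro ⟨n, hn⟩
  have hpos : (0:ℝ) < (1/2)^n := by positivity
  have h1 : ((1:unitInterval):ℝ) = 1 := rfl
  rw [h1] at hn
  linarith

theorem exists_pow_bound {t : unitInterval} (ht : (t:ℝ) < 1) :
    ∃ n : ℕ, (t:ℝ) ≤ 1 - (1/2)^n := by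
  obtain ⟨n, hn⟩ := exists_pow_lt_of_lt_one (show (0:ℝ) < 1 - t by linarith)
    (by norm_num : (1:ℝ)/2 < 1)
  exact ⟨n, by linarith⟩

theorem om_dist (δ : ℕ → Path heBase heBase)
    (hδ : ∀ k t, ((δ k t : heSpace) : ℝ × ℝ) ∈ heTailSet k) (n : ℕ) (t : unitInterval) :
    dist (om δ t) (FF n δ t) ≤ 4 / (n + 1) := by
  have hδ0 : ∀ k t, ((δ k t : heSpace) : ℝ × ℝ) ∈ heTailSet (0 + k) := by
    intro k t; rw [Nat.zero_add]; exact hδ k t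
  by_cases hle : (t:ℝ) ≤ 1 - (1/2)^n
  · rw [om_eq δ n hle, dist_self]
    positivity
  · push_neg at hle
    have hmem1 : ((FF n δ t : heSpace) : ℝ × ℝ) ∈ heTailSet n := by
      have h1 := FF_tail n 0 n δ hδ0 t (le_of_lt hle)
      rwa [Nat.zero_add] at h1
    have hmem2 : ((om δ t : heSpace) : ℝ × ℝ) ∈ heTailSet n := by
      by_cases ht1 : t = 1
      · rw [ht1, om_one]
        exact origin_mem_heTailSet n
      · have htlt : (t:ℝ) < 1 := lt_of_le_of_ne t.2.2 (fun h => ht1 (Subtype.ext h))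
        obtain ⟨m, hm⟩ := exists_pow_bound htlt
        rw [om_eq δ m hm]
        have h1 := FF_tail n 0 m δ hδ0 t (le_of_lt hle)
        rwa [Nat.zero_add] at h1
    rw [Subtype.dist_eq]
    exact heTailSet_dist hmem2 hmem1

theorem om_continuous (δ : ℕ → Path heBase heBase)
    (hδ : ∀ k t, ((δ k t : heSpace) : ℝ × ℝ) ∈ heTailSet k) : Continuous (om δ) := by
  apply TendstoUniformly.continuous (F := fun n (t : unitInterval) => FF n δ t)
    (p := Filter.atTop)
  · rw [Metric.tendstoUniformly_iff]
    intro ε hε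
    obtain ⟨N, hN⟩ := exists_nat_gt (4/ε)
    rw [Filter.eventually_atTop]
    refine ⟨N, fun n hn t => ?_⟩
    have h1 : dist (om δ t) (FF n δ t) ≤ 4 / (n+1) := om_dist δ hδ n t
    have h2 : (4:ℝ) / (n+1) < ε := by
      rw [div_lt_iff₀ (by positivity)]
      have h3 : 4 / ε < (n:ℝ) + 1 := by
        calc (4:ℝ)/ε < N := hN
        _ ≤ (n:ℝ) := by exact_mod_cast hn
        _ ≤ (n:ℝ) + 1 := by linarith
      rw [div_lt_iff₀ hε] at h3
      linarith
    linarith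
  · exact Filter.Frequently.of_forall (fun n => (FF n δ).continuous)

def OmegaPath (δ : ℕ → Path heBase heBase)
    (hδ : ∀ k t, ((δ k t : heSpace) : ℝ × ℝ) ∈ heTailSet k) : Path heBase heBase where
  toFun := om δ
  continuous_toFun := om_continuous δ hδ
  source' := by
    show om δ 0 = heBase
    have h0 : (((0:unitInterval)):ℝ) ≤ 1 - (1/2)^0 := by norm_num
    rw [om_eq δ 0 h0]
    exact (FF 0 δ).source
  target' := om_one δ

def OmegaPath' (δ : ℕ → Path heBase heBase) : Path heBase heBase :=
  if h : ∀ k t, ((δ k t : heSpace) : ℝ × ℝ) ∈ heTailSet k then OmegaPath δ h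
  else Path.refl heBase

theorem OmegaPath'_mem (δ : ℕ → Path heBase heBase)
    (hδ : ∀ k t, ((δ k t : heSpace) : ℝ × ℝ) ∈ heTailSet k)
    (S : Set (ℝ × ℝ)) (hS : ∀ k t, ((δ k t : heSpace) : ℝ × ℝ) ∈ S) :
    ∀ t, ((OmegaPath' δ t : heSpace) : ℝ × ℝ) ∈ S := by
  intro t
  rw [OmegaPath', dif_pos hδ]
  show ((om δ t : heSpace) : ℝ × ℝ) ∈ S
  rw [om]
  split_ifs with h
  · exact FF_mem S _ δ hS t
  · have h0 := hS 0 0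
    rw [(δ 0).source] at h0
    exact h0

theorem shift_mem (δ : ℕ → Path heBase heBase)
    (hδ : ∀ k t, ((δ k t : heSpace) : ℝ × ℝ) ∈ heTailSet k) :
    ∀ k t, (((fun j => δ (j+1)) k t : heSpace) : ℝ × ℝ) ∈ heTailSet k :=
  fun k t => heTailSet_antitone (Nat.le_succ k) (hδ (k+1) t)

theorem OmegaPath'_succ (δ : ℕ → Path heBase heBase)
    (hδ : ∀ k t, ((δ k t : heSpace) : ℝ × ℝ) ∈ heTailSet k) :
    OmegaPath' δ = (δ 0).trans (OmegaPath' (fun k => δ (k+1))) := by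
  have hδ' := shift_mem δ hδ
  rw [OmegaPath', dif_pos hδ, OmegaPath', dif_pos hδ']
  apply Path.ext
  funext t
  show om δ t = ((δ 0).trans (OmegaPath (fun k => δ (k+1)) hδ')) t
  rw [Path.trans_apply]
  split_ifs with hle
  · have hb : (t:ℝ) ≤ 1 - (1/2)^1 := by norm_num; linarith
    rw [om_eq δ 1 hb]
    show ((δ 0).trans (FF 0 fun k => δ (k+1))) t = _
    rw [Path.trans_apply, dif_pos hle]
  · push_neg at hle
    by_cases ht1 : t = 1
    · subst ht1
      have harg : (⟨2 * ((1:unitInterval):ℝ) - 1, by norm_num⟩ : unitInterval) = 1 := by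
        apply Subtype.ext
        show 2 * ((1:unitInterval):ℝ) - 1 = 1
        have h1 : ((1:unitInterval):ℝ) = 1 := rfl
        rw [h1]; norm_num
      rw [om_one]
      show heBase = om (fun k => δ (k+1)) _
      rw [harg, om_one]
    · have htlt : (t:ℝ) < 1 := lt_of_le_of_ne t.2.2 (fun h => ht1 (Subtype.ext h))
      have h2lt : 2 * (t:ℝ) - 1 < 1 := by linarith
      have hmem : 2 * (t:ℝ) - 1 ∈ unitInterval := by
        constructor
        · simp only [sub_nonneg]; linarith
        · linarith
      obtain ⟨n, hn⟩ := exists_pow_bound (t := ⟨2*(t:ℝ)-1, hmem⟩) h2lt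
      have hn' : 2*(t:ℝ)-1 ≤ 1 - (1/2)^n := hn
      have hb : (t:ℝ) ≤ 1 - (1/2)^(n+1) := by
        have he : ((1:ℝ)/2)^(n+1) = (1/2)*((1/2)^n) := by ring
        rw [he]; linarith
      rw [om_eq δ (n+1) hb]
      show ((δ 0).trans (FF n fun k => δ (k+1))) t = _
      rw [Path.trans_apply, dif_neg (by push_neg; exact hle)]
      show (FF n fun k => δ (k+1)) _ = om (fun k => δ (k+1)) _
      rw [om_eq (fun k => δ (k+1)) n hn]

-- ===================== Combinatorial part =====================

section Key

variable {G : Type} [Group G] (φ : HEG →* G) (P : ℕ → Path heBase heBase)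

/-- The image under `φ` of the infinite concatenation of the paths `P (f k)`. -/
def Wf (f : ℕ → ℕ) : G := φ (pcls (OmegaPath' (fun k => P (f k))))

variable (a : ℕ → ℕ)

theorem Wf_levels (hP : ∀ n t, ((P n t : heSpace) : ℝ × ℝ) ∈ heTailSet (a n))
    (han : ∀ n, n ≤ a n) (f : ℕ → ℕ) (hf : ∀ k, k ≤ f k) :
    ∀ k t, (((fun j => P (f j)) k t : heSpace) : ℝ × ℝ) ∈ heTailSet k := by
  intro k t
  exact heTailSet_antitone ((hf k).trans ((han (f k)).trans (le_refl _))) (hP (f k) t)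

theorem Wf_unfold (hP : ∀ n t, ((P n t : heSpace) : ℝ × ℝ) ∈ heTailSet (a n))
    (han : ∀ n, n ≤ a n) (f : ℕ → ℕ) (hf : ∀ k, k ≤ f k) :
    Wf φ P f = Wf φ P (fun k => f (k+1)) * φ (pcls (P (f 0))) := by
  have hδ := Wf_levels P a hP han f hf
  rw [Wf, OmegaPath'_succ _ hδ, pcls_trans]
  exact map_mul φ _ _

theorem Wf_mem (hP : ∀ n t, ((P n t : heSpace) : ℝ × ℝ) ∈ heTailSet (a n))
    (han : ∀ n, n ≤ a n) (f : ℕ → ℕ) (hf : ∀ k, k ≤ f k) (m : ℕ)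
    (hm : ∀ k, m ≤ a (f k)) :
    pcls (OmegaPath' (fun k => P (f k))) ∈ heTailSubgroup m := by
  apply (mem_heTailSubgroup_iff _).mpr
  refine ⟨OmegaPath' (fun k => P (f k)), ?_, rfl⟩
  exact OmegaPath'_mem _ (Wf_levels P a hP han f hf) (heTailSet m)
    (fun k t => heTailSet_antitone (hm k) (hP (f k) t))

theorem prefix_cancel (hP : ∀ n t, ((P n t : heSpace) : ℝ × ℝ) ∈ heTailSet (a n))
    (han : ∀ n, n ≤ a n) :
    ∀ (m : ℕ) (f g : ℕ → ℕ), (∀ k, k ≤ f k) → (∀ k, k ≤ g k) →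
      (∀ i, i < m → f i = g i) → Wf φ P f = Wf φ P g →
      Wf φ P (fun k => f (k+m)) = Wf φ P (fun k => g (k+m)) := by
  intro m
  induction m with
  | zero => intro f g _ _ _ hW; exact hW
  | succ m ih =>
    intro f g hf hg hagree hW
    have h0 : f 0 = g 0 := hagree 0 (Nat.succ_pos m)
    rw [Wf_unfold φ P a hP han f hf, Wf_unfold φ P a hP han g hg, h0] at hW
    have hW1 : Wf φ P (fun k => f (k+1)) = Wf φ P (fun k => g (k+1)) :=
      mul_right_cancel hW
    have hf' : ∀ k, k ≤ f (k+1) := fun k => (Nat.le_succ k).trans (hf (k+1))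
    have hg' : ∀ k, k ≤ g (k+1) := fun k => (Nat.le_succ k).trans (hg (k+1))
    have hagree' : ∀ i, i < m → f (i+1) = g (i+1) := fun i hi => hagree (i+1) (by omega)
    exact ih (fun k => f (k+1)) (fun k => g (k+1)) hf' hg' hagree' hW1

theorem collision_contra (ha : StrictMono a)
    (hP : ∀ n t, ((P n t : heSpace) : ℝ × ℝ) ∈ heTailSet (a n))
    (hbad : ∀ n, φ (pcls (P n)) ∉ (heTailSubgroup (a n + 1)).map φ)
    (F Gf : ℕ → ℕ) (hF : ∀ k, k ≤ F k) (hG : ∀ k, k ≤ Gf k)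
    (hcrossF : ∀ k, F 0 < F (k+1)) (hcrossG : ∀ k, F 0 < Gf (k+1)) (hFG : F 0 < Gf 0)
    (hW : Wf φ P F = Wf φ P Gf) : False := by
  have han : ∀ n, n ≤ a n := fun n => ha.le_apply
  set K : Subgroup G := (heTailSubgroup (a (F 0) + 1)).map φ with hK
  have hmemF : Wf φ P (fun k => F (k+1)) ∈ K := by
    refine Subgroup.mem_map.mpr ⟨_, ?_, rfl⟩
    apply Wf_mem P a hP han (fun k => F (k+1))
      (fun k => (Nat.le_succ k).trans (hF (k+1)))
    intro k
    exact Nat.succ_le_of_lt (ha (hcrossF k))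
  have hmemG : Wf φ P (fun k => Gf (k+1)) ∈ K := by
    refine Subgroup.mem_map.mpr ⟨_, ?_, rfl⟩
    apply Wf_mem P a hP han (fun k => Gf (k+1))
      (fun k => (Nat.le_succ k).trans (hG (k+1)))
    intro k
    exact Nat.succ_le_of_lt (ha (hcrossG k))
  have hmemG0 : φ (pcls (P (Gf 0))) ∈ K := by
    refine Subgroup.mem_map.mpr ⟨_, ?_, rfl⟩
    apply heTailSubgroup_antitone (Nat.succ_le_of_lt (ha hFG))
    exact (mem_heTailSubgroup_iff _).mpr ⟨P (Gf 0), fun t => hP (Gf 0) t, rfl⟩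
  rw [Wf_unfold φ P a hP han F hF, Wf_unfold φ P a hP han Gf hG] at hW
  have hfin : φ (pcls (P (F 0))) ∈ K := by
    have heq : φ (pcls (P (F 0))) =
        (Wf φ P (fun k => F (k+1)))⁻¹ * (Wf φ P (fun k => Gf (k+1)) * φ (pcls (P (Gf 0)))) := by
      rw [← hW]
      group
    rw [heq]
    exact K.mul_mem (K.inv_mem hmemF) (K.mul_mem hmemG hmemG0)
  exact hbad (F 0) hfin

/-- Strictly "cross-monotone" function from a boolean sequence. -/
def bfun (x : ℕ → Bool) (n : ℕ) : ℕ := 2*n + (if x n then 1 else 0)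

theorem bfun_cross (x y : ℕ → Bool) {k m : ℕ} (h : k < m) : bfun x k < bfun y m := by
  have h1 : bfun x k ≤ 2*k + 1 := by rw [bfun]; split <;> omega
  have h2 : 2*m ≤ bfun y m := by rw [bfun]; split <;> omega
  omega

theorem bfun_le (x : ℕ → Bool) (k : ℕ) : k ≤ bfun x k := by
  rw [bfun]; split <;> omega

theorem bfun_ne {x y : ℕ → Bool} {k : ℕ} (h : x k ≠ y k) : bfun x k ≠ bfun y k := by
  rw [bfun, bfun]
  cases hx : x k <;> cases hy : y k <;> simp_all

open Cardinal in
theorem key_lemma {G : Type} [Group G] (hcard : #G < 2 ^ aleph0) (φ : HEG →* G)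
    (a : ℕ → ℕ) (ha : StrictMono a) (P : ℕ → Path heBase heBase)
    (hP : ∀ n t, ((P n t : heSpace) : ℝ × ℝ) ∈ heTailSet (a n))
    (hbad : ∀ n, φ (pcls (P n)) ∉ (heTailSubgroup (a n + 1)).map φ) : False := by
  have han : ∀ n, n ≤ a n := fun n => ha.le_apply
  set Θ : (ℕ → Bool) → G := fun x => Wf φ P (bfun x) with hΘ
  have hninj : ¬ Function.Injective Θ := by
    intro hinj
    have hle : #(ℕ → Bool) ≤ #G := Cardinal.mk_le_of_injective hinj
    have heq : (2 : Cardinal) ^ aleph0 = #(ℕ → Bool) := by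
      rw [← Cardinal.mk_bool, ← Cardinal.mk_nat]
      exact Cardinal.power_def Bool ℕ
    rw [← heq] at hle
    exact absurd (hle.trans_lt hcard) (lt_irrefl _)
  obtain ⟨x, y, hxy, hne⟩ := Function.not_injective_iff.mp hninj
  have hex : ∃ k, x k ≠ y k := Function.ne_iff.mp hne
  set k₀ := Nat.find hex with hk₀
  have hagree : ∀ i, i < k₀ → bfun x i = bfun y i := by
    intro i hi
    have := Nat.find_min hex hi
    push_neg at this
    rw [bfun, bfun, this]
  have hWk : Wf φ P (fun k => bfun x (k+k₀)) = Wf φ P (fun k => bfun y (k+k₀)) :=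
    prefix_cancel φ P a hP han k₀ (bfun x) (bfun y) (bfun_le x) (bfun_le y) hagree hxy
  have hne0 : bfun x k₀ ≠ bfun y k₀ := bfun_ne (Nat.find_spec hex)
  set F : ℕ → ℕ := fun k => bfun x (k+k₀) with hF
  set Gf : ℕ → ℕ := fun k => bfun y (k+k₀) with hGf
  have hFle : ∀ k, k ≤ F k := fun k => le_trans (by omega) (bfun_le x (k+k₀))
  have hGle : ∀ k, k ≤ Gf k := fun k => le_trans (by omega) (bfun_le y (k+k₀))
  rcases lt_trichotomy (F 0) (Gf 0) with hlt | heq0 | hgt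
  · exact collision_contra φ P a ha hP hbad F Gf hFle hGle
      (fun k => bfun_cross x x (by omega)) (fun k => bfun_cross x y (by omega)) hlt hWk
  · apply hne0
    have e1 : F 0 = bfun x k₀ := by rw [hF]; norm_num
    have e2 : Gf 0 = bfun y k₀ := by rw [hGf]; norm_num
    rw [← e1, ← e2]
    exact heq0
  · exact collision_contra φ P a ha hP hbad Gf F hGle hFle
      (fun k => bfun_cross y y (by omega)) (fun k => bfun_cross y x (by omega)) hgt hWk.symm

end Key

open Cardinal in
/-- A group of cardinality less than the continuum is noncommutatively slender if and
only if it is residually noncommutatively slender. -/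
theorem stmt_14 (G : Type) [Group G] (hcard : #G < 2 ^ aleph0) :
    NSlender G ↔
      ∀ g : G, g ≠ 1 →
        ∃ (H : Type) (_ : Group H), NSlender H ∧ ∃ ψ : G →* H, ψ g ≠ 1 := by
  constructor
  · intro hns g hg
    exact ⟨G, ‹Group G›, hns, MonoidHom.id G, by simpa using hg⟩
  · intro hres φ
    by_contra hno
    push_neg at hno
    set pA : ℕ → Prop :=
      fun n => ∃ x, x ∈ heTailSubgroup n ∧ φ x ∉ (heTailSubgroup (n+1)).map φ with hpA
    by_cases hA : (setOf pA).Infinite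
    · have ha : StrictMono (Nat.nth pA) := Nat.nth_strictMono hA
      have hmem : ∀ n, pA (Nat.nth pA n) := fun n => Nat.nth_mem_of_infinite hA n
      choose x hx1 hx2 using hmem
      choose P hP1 hP2 using fun n => (mem_heTailSubgroup_iff (x n)).mp (hx1 n)
      refine key_lemma hcard φ (Nat.nth pA) ha P (fun n t => hP1 n t) (fun n => ?_)
      rw [hP2 n]
      exact hx2 n
    · rw [Set.not_infinite] at hA
      obtain ⟨b, hb⟩ := hA.bddAbove
      have hnotA : ∀ n, b + 1 ≤ n → ∀ z ∈ heTailSubgroup n,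
          φ z ∈ (heTailSubgroup (n+1)).map φ := by
        intro n hn z hz
        by_contra hzz
        have hnA : n ∈ setOf pA := ⟨z, hz, hzz⟩
        have := hb hnA
        omega
      have hchain : ∀ m, b + 1 ≤ m →
          (heTailSubgroup (b+1)).map φ ≤ (heTailSubgroup m).map φ := by
        intro m hm
        induction m, hm using Nat.le_induction with
        | base => exact le_refl _
        | succ m hm ih =>
          refine ih.trans ?_
          rintro z ⟨w, hw, rfl⟩
          exact hnotA m hm w hw
      obtain ⟨g, hg1, hg2⟩ := hno (b+1)
      have hxmem : ∀ m, φ g ∈ (heTailSubgroup m).map φ := by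
        intro m
        rcases le_total m (b+1) with hm | hm
        · exact Subgroup.map_mono (heTailSubgroup_antitone hm) ⟨g, hg1, rfl⟩
        · exact hchain m hm ⟨g, hg1, rfl⟩
      obtain ⟨H, instH, hnsH, ψ, hψ⟩ := hres (φ g) hg2
      obtain ⟨n₀, hkill⟩ := hnsH (ψ.comp φ)
      obtain ⟨y, hy, hxy⟩ := hxmem n₀
      apply hψ
      rw [← hxy]
      exact hkill y hy

end
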